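/- If $2^\kappa = \kappa^+$ and $\lambda = \kappa^+$, then $\kappa \times \lambda$ can be partitioned into $\lambda$ many thick subsets, where thick means $(\kappa,\lambda)$-thick. -/
import Mathlib


open Cardinal Set

lemma exists_sdr {A : Type} {κ : Cardinal.{0}} 
    {ι : Type} (hι : #ι ≤ κ) (S : ι → Set A) (hS : ∀ i, κ ≤ #(S i)) :
    ∃ m : ι → A, Function.Injective m ∧ ∀ i, m i ∈ S i := by
  classical
  rcases isEmpty_or_nonempty ι with h | ⟨⟨i0⟩⟩
  · exact ⟨isEmptyElim, Function.injective_of_subsingleton _, fun i => isEmptyElim i⟩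
  obtain ⟨j⟩ : Nonempty (ι ↪ κ.ord.ToType) := by
    rw [← Cardinal.le_def, mk_toType, card_ord]; exact hι
  set T := κ.ord.ToType
  let idx : T → ι := fun x => if h : ∃ i, j i = x then h.choose else i0
  have idxj : ∀ i, idx (j i) = i := by
    intro i
    have h : ∃ i', j i' = j i := ⟨i, rfl⟩
    simp only [idx, dif_pos h]
    exact j.injective h.choose_spec
  have wf : WellFounded ((· < ·) : T → T → Prop) := IsWellFounded.wf
  have key : ∀ (x : T) (f : ∀ y, y < x → A),
      (S (idx x) \ Set.range (fun y : {y : T // y < x} => f y.1 y.2)).Nonempty := by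
    intro x f
    rw [Set.nonempty_iff_ne_empty]
    intro hemp
    rw [Set.diff_eq_empty] at hemp
    have h1 : κ ≤ #(Set.range fun y : {y : T // y < x} => f y.1 y.2) :=
      (hS _).trans (Cardinal.mk_le_mk_of_subset hemp)
    have h2 := Cardinal.mk_range_le (f := fun y : {y : T // y < x} => f y.1 y.2)
    have h3 : #{y : T // y < x} < κ := mk_Iio_ord_toType x
    exact absurd (h1.trans h2) (not_le.mpr h3)
  let F : T → A := wf.fix (fun x f => (key x f).some)
  have Feq : ∀ x, F x = (key x (fun y _ => F y)).some := fun x => wf.fix_eq _ x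
  have Fmem : ∀ x, F x ∈ S (idx x) \ Set.range (fun y : {y : T // y < x} => F y.1) := by
    intro x; rw [Feq x]; exact (key x (fun y _ => F y)).some_mem
  have Finj : Function.Injective F := by
    intro a b hab
    rcases lt_trichotomy a b with h | h | h
    · exact absurd ⟨⟨a, h⟩, hab⟩ (Fmem b).2
    · exact h
    · exact absurd ⟨⟨b, h⟩, hab.symm⟩ (Fmem a).2
  refine ⟨fun i => F (j i), Finj.comp j.injective, fun i => ?_⟩
  have := (Fmem (j i)).1
  rwa [idxj] at this


/-- if `2^κ = κ⁺` and `λ = κ⁺`, then `κ × λ` can be partitioned into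
`λ` many thick (i.e. `(κ,λ)`-thick) subsets. -/
theorem stmt13 (κ lam : Cardinal.{0}) (hκ : ℵ₀ ≤ κ)
    (hch : 2 ^ κ = Order.succ κ) (hlam : lam = Order.succ κ) :
    ∃ E : (Quotient.out lam) → Set ((Quotient.out κ) × (Quotient.out lam)),
      (⋃ i, E i) = Set.univ ∧ Pairwise (Function.onFun Disjoint E) ∧
      ∀ i, ∀ M : Set (Quotient.out κ), #M = κ →
        ∀ N : Set (Quotient.out lam), #N = lam →
          (E i ∩ M ×ˢ N).Nonempty := by
  classical
  set A := Quotient.out κ with hAdef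
  set B := Quotient.out lam with hBdef
  have hA : #A = κ := Cardinal.mk_out κ
  have hB : #B = lam := Cardinal.mk_out lam
  set T := lam.ord.ToType with hTdef
  have hTcard : #T = lam := by rw [hTdef, mk_toType, card_ord]
  have hκlam : κ < lam := hlam ▸ Order.lt_succ κ
  have hlam0 : ℵ₀ ≤ lam := hκ.trans hκlam.le
  -- initial segments of T are small
  have hIio : ∀ x : T, #{y : T // y < x} ≤ κ := by
    intro x
    have h : #{y : T // y < x} < lam := mk_Iio_ord_toType x
    have h2 : #{y : T // y < x} < Order.succ κ := by rw [← hlam]; exact h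
    exact Order.lt_succ_iff.mp h2
  have hIic : ∀ x : T, #{y : T // y ≤ x} ≤ κ := by
    intro x
    have h1 : #(insert x (Set.Iio x) : Set T) ≤ #(Set.Iio x) + 1 := Cardinal.mk_insert_le
    rw [Set.Iio_insert] at h1
    have h2 : #(Set.Iio x) + 1 ≤ κ + κ :=
      add_le_add (hIio x) (one_le_aleph0.trans hκ)
    rw [Cardinal.add_eq_self hκ] at h2
    exact h1.trans h2
  -- equiv B ≃ T
  obtain ⟨e⟩ : Nonempty (B ≃ T) := Cardinal.eq.mp (hB.trans hTcard.symm)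
  -- enumeration of κ-sized subsets of A
  set K := {M : Set A // #M = κ} with hKdef
  have hKne : Nonempty K := ⟨⟨Set.univ, by rw [Cardinal.mk_univ, hA]⟩⟩
  obtain ⟨emb⟩ : Nonempty (K ↪ T) := by
    rw [← Cardinal.le_def]
    have h1 : #K ≤ #(Set A) := Cardinal.mk_subtype_le _
    rw [Cardinal.mk_set, hA, hch, ← hlam] at h1
    rwa [hTcard]
  let Mfam : T → K := Function.invFun emb
  have hMsur : Function.Surjective Mfam := Function.invFun_surjective emb.injective
  -- nonempty T
  have hTne : Nonempty T := by
    rw [← Cardinal.mk_ne_zero_iff, hTcard]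
    exact (aleph0_pos.trans_le hlam0).ne'
  obtain ⟨t0⟩ := hTne
  -- column functions
  have hcol : ∀ β : T, ∃ g : A → T,
      ∀ i α : T, i < β → α < β → ∃ x ∈ (Mfam α : Set A), g x = i := by
    intro β
    set P := {p : T × T // p.1 < β ∧ p.2 < β} with hPdef
    have hPcard : #P ≤ κ := by
      have h1 : #P ≤ #({y : T // y < β} × {y : T // y < β}) :=
        Cardinal.mk_le_of_injective (f := fun p : P =>
          (⟨p.1.1, p.2.1⟩, ⟨p.1.2, p.2.2⟩)) (by
            rintro ⟨⟨a, b⟩, _⟩ ⟨⟨c, d⟩, _⟩ h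
            simp only [Prod.mk.injEq, Subtype.mk.injEq] at h
            simp [Prod.ext_iff, h.1, h.2])
      have h2 : #({y : T // y < β} × {y : T // y < β}) = #{y : T // y < β} * #{y : T // y < β} := by
        simp [Cardinal.mk_prod]
      have h3 : #{y : T // y < β} * #{y : T // y < β} ≤ κ * κ :=
        mul_le_mul' (hIio β) (hIio β)
      rw [Cardinal.mul_eq_self hκ] at h3
      exact h1.trans (h2.le.trans h3)
    obtain ⟨m, minj, mmem⟩ := exists_sdr hPcard (fun q : P => (Mfam q.1.2 : Set A))
      (fun q => (Mfam q.1.2).2.ge)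
    refine ⟨fun a => if h : ∃ q : P, m q = a then (h.choose).1.1 else t0, ?_⟩
    intro i α hi hα
    refine ⟨m ⟨(i, α), hi, hα⟩, mmem ⟨(i, α), hi, hα⟩, ?_⟩
    have h : ∃ q : P, m q = m ⟨(i, α), hi, hα⟩ := ⟨⟨(i, α), hi, hα⟩, rfl⟩
    show (if h : ∃ q : P, m q = m ⟨(i, α), hi, hα⟩ then (h.choose).1.1 else t0) = i
    rw [dif_pos h]
    have := minj h.choose_spec
    rw [this]
  choose c hc using hcol
  -- the coloring
  refine ⟨fun j => {p : A × B | e.symm (c (e p.2) p.1) = j}, ?_, ?_, ?_⟩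
  · ext p
    simp only [Set.mem_iUnion, Set.mem_univ, iff_true]
    exact ⟨e.symm (c (e p.2) p.1), rfl⟩
  · intro i j hij
    rw [Function.onFun, Set.disjoint_left]
    intro p hpi hpj
    exact hij (hpi.symm.trans hpj)
  · intro j M hM N hN
    obtain ⟨α, hα⟩ : ∃ α : T, (Mfam α : Set A) = M := by
      obtain ⟨α, hα⟩ := hMsur ⟨M, hM⟩
      exact ⟨α, by rw [hα]⟩
    set i := e j with hidef
    -- find β in e '' N above max i α
    have hbig : ∃ β ∈ e '' N, i < β ∧ α < β := by
      by_contra hcon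
      push_neg at hcon
      have hsub : e '' N ⊆ {y : T | y ≤ max i α} := by
        intro β hβ
        by_contra hle
        simp only [Set.mem_setOf_eq, not_le] at hle
        have h1 : i < β := (le_max_left i α).trans_lt hle
        have h2 : α < β := (le_max_right i α).trans_lt hle
        exact absurd (hcon β hβ h1) (not_le.mpr h2)
      have h1 : #(e '' N) ≤ κ := (Cardinal.mk_le_mk_of_subset hsub).trans (hIic _)
      rw [Cardinal.mk_image_eq e.injective, hN] at h1
      exact absurd h1 (not_le.mpr hκlam)
    obtain ⟨β, hβN, hiβ, hαβ⟩ := hbig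
    obtain ⟨x, hxM, hxc⟩ := hc β i α hiβ hαβ
    rw [hα] at hxM
    obtain ⟨n, hnN, hne⟩ := hβN
    refine ⟨(x, n), ?_, hxM, hnN⟩
    simp only [Set.mem_setOf_eq]
    rw [hne, hxc, hidef, Equiv.symm_apply_apply]
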